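/- arXiv:2402.18232 — 2 statements merged into one kernel-verified Lean document; each statement's English description precedes it below -/
import Mathlib

section
/- Let V₁, V₂, V₃, I₁, I₂, I₃ be complex numbers with I₁ ≠ 0, I₁ + I₂ + I₃ = 0 and I₂ = I₁ e^{(2π/3)i}. Define the reduced current Iᴿ = I₁, the reduced voltage drop Vᴿ = (V₁ − V₃) + (V₂ − V₃) e^{−(2π/3)i}, and the reduced impedance Zᴿ = Vᴿ / Iᴿ. If I = |Iᴿ| denotes the common amplitude of the terminal currents, then the total complex power S = (1/2) ∑_{k=1}^{3} V_k conj(I_k) satisfies S = (1/2) Zᴿ I². -/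
theorem complex_power_reduced_impedance
    (V₁ V₂ V₃ I₁ I₂ I₃ : ℂ)
    (hI₁ : I₁ ≠ 0)
    (hKCL : I₁ + I₂ + I₃ = 0)
    (hbal : I₂ = I₁ * Complex.exp ((2 * Real.pi / 3) * Complex.I)) :
    let IR : ℂ := I₁
    let VR : ℂ := (V₁ - V₃) + (V₂ - V₃) * Complex.exp (-(2 * Real.pi / 3) * Complex.I)
    let ZR : ℂ := VR / IR
    let I : ℝ := ‖IR‖
    (1/2 : ℂ) * (V₁ * (starRingEnd ℂ) I₁ + V₂ * (starRingEnd ℂ) I₂ + V₃ * (starRingEnd ℂ) I₃)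
      = (1/2 : ℂ) * ZR * (I : ℂ) ^ 2 := by
  intro IR VR ZR I
  have hI₃ : I₃ = -(I₁ + I₂) := by linear_combination hKCL
  have hconj : (starRingEnd ℂ) (Complex.exp ((2 * Real.pi / 3) * Complex.I))
      = Complex.exp (-(2 * Real.pi / 3) * Complex.I) := by
    have h1 : ((2:ℂ) * Real.pi / 3 * Complex.I) = ((2*Real.pi/3 : ℝ) : ℂ) * Complex.I := by
      push_cast; ring
    rw [h1, ← Complex.exp_conj, map_mul, Complex.conj_I, Complex.conj_ofReal]
    push_cast; ring_nf
  have habs : ((I : ℂ)) ^ 2 = I₁ * (starRingEnd ℂ) I₁ := by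
    rw [Complex.mul_conj]
    norm_cast
    simp [I, IR, Complex.sq_norm]
  simp only [ZR, VR, IR]
  rw [habs, hI₃, hbal]
  simp only [map_add, map_mul, map_neg, hconj]
  field_simp
  ring
end

section
/- Let V₁, V₂, V₃, I₁, I₂, I₃ be complex numbers with I₁ ≠ 0, I₁ + I₂ + I₃ = 0 and I₂ = I₁ e^{(2π/3)i}. Define Iᴿ = I₁, Vᴿ = (V₁ − V₃) + (V₂ − V₃) e^{−(2π/3)i}, Zᴿ = Vᴿ / Iᴿ, and I = |Iᴿ|. Then the active power absorbed by the network, P = Re((1/2) ∑_{k=1}^{3} V_k conj(I_k)), satisfies P = (1/2) Re(Zᴿ) I². -/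
theorem active_power_reduced_impedance
    (V₁ V₂ V₃ I₁ I₂ I₃ : ℂ)
    (hI₁ : I₁ ≠ 0)
    (hKCL : I₁ + I₂ + I₃ = 0)
    (hbal : I₂ = I₁ * Complex.exp ((2 * Real.pi / 3) * Complex.I)) :
    let IR : ℂ := I₁
    let VR : ℂ := (V₁ - V₃) + (V₂ - V₃) * Complex.exp (-(2 * Real.pi / 3) * Complex.I)
    let ZR : ℂ := VR / IR
    let I : ℝ := ‖IR‖
    ((1/2 : ℂ) * (V₁ * (starRingEnd ℂ) I₁ + V₂ * (starRingEnd ℂ) I₂ + V₃ * (starRingEnd ℂ) I₃)).re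
      = (1/2 : ℝ) * ZR.re * I ^ 2 := by
  intro IR VR ZR I
  have hI3 : I₃ = -(I₁ + I₂) := by linear_combination hKCL
  have hconj : (starRingEnd ℂ) (Complex.exp ((2 * Real.pi / 3) * Complex.I))
      = Complex.exp (-(2 * Real.pi / 3) * Complex.I) := by
    rw [← Complex.exp_conj]
    congr 1
    simp only [map_mul, map_div₀, Complex.conj_I, Complex.conj_ofReal, map_ofNat]
    ring
  have hprod : Complex.exp ((2 * Real.pi / 3) * Complex.I) *
      Complex.exp (-(2 * Real.pi / 3) * Complex.I) = 1 := by
    rw [← Complex.exp_add]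
    ring_nf
    exact Complex.exp_zero
  have key : V₁ * (starRingEnd ℂ) I₁ + V₂ * (starRingEnd ℂ) I₂ + V₃ * (starRingEnd ℂ) I₃
      = VR * (starRingEnd ℂ) I₁ := by
    subst hI3 hbal
    simp only [map_mul, map_add, map_neg, hconj, VR]
    ring
  have hVR : VR = ZR * I₁ := by
    exact (div_mul_cancel₀ VR hI₁).symm
  rw [key, hVR, mul_assoc, Complex.mul_conj]
  have : I ^ 2 = Complex.normSq I₁ := by
    simp [I, IR, Complex.sq_norm]
  rw [this]
  simp [Complex.mul_re, Complex.ofReal_re]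
  ring
end
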